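/- Let r and h be positive integers with r < φ^h, and let s, t be integers with 0 ≤ s ≤ r−1 and 0 ≤ t ≤ r−1. Then there exist nonnegative integers u and v such that u = G(v), u ≡ s (mod r), v ≡ t (mod r), and if v > 0 then v has a Zeckendorf representation of length at most 2h; that is, there is a bit string β = β_1…β_L with L ≤ 2h, each β_i ∈ {0,1}, β_L = 1, no two consecutive bits both 1, and v = Σ_{i=1}^L β_i F_{i+1}. -/

import Mathlib

open Real goldenRatio

noncomputable def goldenphi : ℝ := (1 + Real.sqrt 5) / 2

noncomputable def hofG (x : ℕ) : ℕ := (⌊((x : ℝ) + 1) / goldenphi⌋).toNat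

lemma sqrt5_gt_two : (2:ℝ) < Real.sqrt 5 := by
  nlinarith [Real.sq_sqrt (show (0:ℝ) ≤ 5 by norm_num), Real.sqrt_nonneg 5]

lemma gold_gt_three_halves : (3:ℝ)/2 < φ := by
  have := sqrt5_gt_two
  unfold goldenRatio
  nlinarith

lemma inv_gold_eq : φ⁻¹ = φ - 1 := by
  rw [inv_goldenRatio]
  linarith [goldenRatio_add_goldenConj]

lemma psi_eq : (ψ : ℝ) = -(φ⁻¹) := by
  rw [inv_goldenRatio]; ring

-- main hitting lemma
lemma hitting : ∀ (l : ℕ) (x : ℝ), ∃ (k : ℕ) (n : ℤ), k < Nat.fib (l+2) ∧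
    x ≤ (k:ℝ) * φ - n ∧ (k:ℝ) * φ - n < x + φ⁻¹ ^ l := by
  intro l
  induction l with
  | zero =>
    intro x
    refine ⟨0, -⌈x⌉, by norm_num [Nat.fib], ?_, ?_⟩
    · push_cast; simpa using Int.le_ceil x
    · push_cast; simpa using Int.ceil_lt_add_one x
  | succ m ih =>
    match m, ih with
    | 0, _ =>
      intro x
      have hinv : φ⁻¹ = φ - 1 := inv_gold_eq
      have hφ : (3:ℝ)/2 < φ := gold_gt_three_halves
      have h2 : φ < 2 := goldenRatio_lt_two
      by_cases hc : (⌈x⌉ : ℝ) < x + φ⁻¹ ^ 1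
      · refine ⟨0, -⌈x⌉, by norm_num [Nat.fib], ?_, ?_⟩
        · push_cast; simpa using Int.le_ceil x
        · push_cast; simpa using hc
      · push_neg at hc
        refine ⟨1, 2 - ⌈x⌉, by norm_num [Nat.fib], ?_, ?_⟩
        · push_cast
          have := Int.le_ceil x
          rw [pow_one, hinv] at hc
          nlinarith
        · push_cast
          have := Int.ceil_lt_add_one x
          rw [pow_one, hinv]
          nlinarith
    | m'+1, ih =>
      intro x
      set L := m' + 2 with hL
      have hq : (0:ℝ) < φ⁻¹ := inv_pos.mpr goldenRatio_pos
      have hinv : φ⁻¹ = φ - 1 := inv_gold_eq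
      have h2 : φ < 2 := goldenRatio_lt_two
      set lam : ℝ := φ⁻¹ ^ L with hlam
      have hlampos : 0 < lam := pow_pos hq L
      have hprev : φ⁻¹ ^ (m'+1) = φ * lam := by
        calc φ⁻¹ ^ (m'+1) = (φ * φ⁻¹) * φ⁻¹ ^ (m'+1) := by
              rw [mul_inv_cancel₀ goldenRatio_ne_zero, one_mul]
        _ = φ * lam := by rw [hlam, hL, pow_succ]; ring
      have hxi : (Nat.fib L : ℝ) * φ - Nat.fib (L+1) = -ψ^L := by
        have := fib_succ_sub_goldenRatio_mul_fib L
        nlinarith [this]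
      have hpsiL : ψ ^ L = (-1:ℝ)^L * lam := by
        rw [psi_eq, hlam, neg_pow]
      have hfibadd : Nat.fib (L + 2) = Nat.fib L + Nat.fib (L+1) := Nat.fib_add_two
      rcases Nat.even_or_odd L with hev | hodd
      · -- shift = -lam
        have hxiv : (Nat.fib L : ℝ) * φ - Nat.fib (L+1) = -lam := by
          rw [hxi, hpsiL, hev.neg_one_pow]; ring
        obtain ⟨k, n, hk, h1, h2'⟩ := ih x
        have hk' : k < Nat.fib (L + 1) := by
          simpa [show m'+1+2 = L+1 by omega] using hk
        rw [hprev] at h2'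
        by_cases hcase : (k:ℝ) * φ - n < x + lam
        · exact ⟨k, n, by omega, h1, hcase⟩
        · push_neg at hcase
          refine ⟨k + Nat.fib L, n + Nat.fib (L+1), by omega, ?_, ?_⟩
          · push_cast
            nlinarith [hxiv]
          · push_cast
            nlinarith [hxiv, mul_pos (sub_pos.mpr goldenRatio_pos) hlampos]
      · -- shift = +lam
        have hxiv : (Nat.fib L : ℝ) * φ - Nat.fib (L+1) = lam := by
          rw [hxi, hpsiL, hodd.neg_one_pow]; ring
        obtain ⟨k, n, hk, h1, h2'⟩ := ih (x - lam)
        have hk' : k < Nat.fib (L + 1) := by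
          simpa [show m'+1+2 = L+1 by omega] using hk
        rw [hprev] at h2'
        by_cases hcase : x ≤ (k:ℝ) * φ - n
        · refine ⟨k, n, by omega, hcase, ?_⟩
          nlinarith
        · push_neg at hcase
          refine ⟨k + Nat.fib L, n + Nat.fib (L+1), by omega, ?_, ?_⟩
          · push_cast
            nlinarith [hxiv]
          · push_cast
            nlinarith [hxiv]

lemma fib_window : ∀ v : ℕ, 0 < v → ∃ L, 1 ≤ L ∧ Nat.fib (L+1) ≤ v ∧ v < Nat.fib (L+2) := by
  intro v
  induction v with
  | zero => omega
  | succ w ih =>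
    intro _
    by_cases hw : 0 < w
    · obtain ⟨L, hL1, hL2, hL3⟩ := ih hw
      by_cases hc : w + 1 < Nat.fib (L+2)
      · exact ⟨L, hL1, by omega, hc⟩
      · have he : w + 1 = Nat.fib (L+2) := by omega
        refine ⟨L+1, by omega, ?_, ?_⟩
        · show Nat.fib (L+2) ≤ w + 1
          omega
        · show w + 1 < Nat.fib (L+3)
          rw [he]
          exact Nat.fib_lt_fib_succ (by omega)
    · have : w = 0 := by omega
      subst this
      exact ⟨1, le_refl 1, by norm_num [Nat.fib], by norm_num [Nat.fib]⟩

lemma zeck : ∀ v : ℕ, 0 < v → ∃ (L : ℕ) (β : ℕ → ℕ), 1 ≤ L ∧ Nat.fib (L+1) ≤ v ∧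
    (∀ i, β i = 0 ∨ β i = 1) ∧ β L = 1 ∧
    (∀ i, 1 ≤ i → i < L → ¬(β i = 1 ∧ β (i+1) = 1)) ∧
    v = ∑ i ∈ Finset.Icc 1 L, β i * Nat.fib (i + 1) := by
  intro v
  induction v using Nat.strong_induction_on with
  | _ v ih =>
  intro hv
  obtain ⟨L, hL1, hL2, hL3⟩ := fib_window v hv
  set w := v - Nat.fib (L+1) with hw
  have hfibpos : 0 < Nat.fib (L+1) := Nat.fib_pos.mpr (by omega)
  by_cases hw0 : w = 0
  · -- v = fib (L+1)
    have hveq : v = Nat.fib (L+1) := by omega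
    refine ⟨L, fun i => if i = L then 1 else 0, hL1, hL2, ?_, by simp, ?_, ?_⟩
    · intro i; by_cases h : i = L <;> simp [h]
    · intro i h1 h2 ⟨ha, hb⟩
      simp only [if_neg (by omega : ¬ i = L)] at ha
      omega
    · rw [hveq]
      have : ∀ i ∈ Finset.Icc 1 L, (if i = L then 1 else 0) * Nat.fib (i+1)
          = if i = L then Nat.fib (L+1) else 0 := by
        intro i _
        by_cases h : i = L <;> simp [h]
      rw [Finset.sum_congr rfl this, Finset.sum_ite_eq' (Finset.Icc 1 L) L]
      simp [Finset.mem_Icc, hL1]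
  · -- recurse
    have hwlt : w < Nat.fib L := by
      have := Nat.fib_add_two (n := L)
      omega
    have hwv : w < v := by omega
    obtain ⟨L', β', h1', h2', h3', h4', h5', h6'⟩ := ih w (by omega) (by omega)
    have hLL : L' + 1 < L := by
      by_contra hcon
      push_neg at hcon
      have := Nat.fib_mono (show L ≤ L' + 1 by omega)
      omega
    refine ⟨L, fun i => if i = L then 1 else if i ≤ L' then β' i else 0, hL1, hL2, ?_, by simp, ?_, ?_⟩
    · intro i
      by_cases h : i = L
      · simp [h]
      · by_cases h2 : i ≤ L' <;> simp [h, h2, h3' i]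
    · intro i hi1 hi2 ⟨ha, hb⟩
      dsimp only at ha hb
      rw [if_neg (by omega : ¬ i = L)] at ha
      by_cases hiL' : i ≤ L'
      · rw [if_pos hiL'] at ha
        by_cases hip : i + 1 = L
        · omega
        · rw [if_neg hip] at hb
          by_cases hip2 : i + 1 ≤ L'
          · rw [if_pos hip2] at hb
            exact h5' i hi1 (by omega) ⟨ha, hb⟩
          · rw [if_neg hip2] at hb
            omega
      · rw [if_neg hiL'] at ha
        omega
    · have hsplit : Finset.Icc 1 L = Finset.Icc 1 L' ∪ Finset.Ioc L' L := by
        ext a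
        simp only [Finset.mem_union, Finset.mem_Icc, Finset.mem_Ioc]
        omega
      have hdisj : Disjoint (Finset.Icc 1 L') (Finset.Ioc L' L) := by
        rw [Finset.disjoint_left]
        intro a ha hb
        simp only [Finset.mem_Icc, Finset.mem_Ioc] at ha hb
        omega
      rw [hsplit, Finset.sum_union hdisj]
      have e1 : ∑ i ∈ Finset.Icc 1 L', (if i = L then 1 else if i ≤ L' then β' i else 0) * Nat.fib (i+1)
          = ∑ i ∈ Finset.Icc 1 L', β' i * Nat.fib (i+1) := by
        apply Finset.sum_congr rfl
        intro i hi
        simp only [Finset.mem_Icc] at hi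
        rw [if_neg (by omega : ¬ i = L), if_pos hi.2]
      have e2 : ∑ i ∈ Finset.Ioc L' L, (if i = L then 1 else if i ≤ L' then β' i else 0) * Nat.fib (i+1)
          = Nat.fib (L+1) := by
        have : ∀ i ∈ Finset.Ioc L' L, (if i = L then 1 else if i ≤ L' then β' i else 0) * Nat.fib (i+1)
            = if i = L then Nat.fib (L+1) else 0 := by
          intro i hi
          simp only [Finset.mem_Ioc] at hi
          by_cases h : i = L
          · simp [h]
          · rw [if_neg h, if_neg (by omega : ¬ i ≤ L'), if_neg h]
            ring
        rw [Finset.sum_congr rfl this, Finset.sum_ite_eq' (Finset.Ioc L' L) L]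
        simp [Finset.mem_Ioc, hLL.le]
        omega
      rw [e1, e2, ← h6']
      omega

lemma goldenphi_eq : goldenphi = φ := rfl

lemma key_bound (r h : ℕ) (hh : 0 < h) (hr : (r:ℝ) < φ ^ h) :
    r * Nat.fib (h+2) ≤ Nat.fib (2*h+2) := by
  have h5 : (0:ℝ) < Real.sqrt 5 := by positivity
  have hs2 : (2:ℝ) < Real.sqrt 5 := sqrt5_gt_two
  have hq : (0:ℝ) < φ⁻¹ := inv_pos.mpr goldenRatio_pos
  have hq1 : φ⁻¹ < 1 := by
    rw [inv_gold_eq]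
    linarith [goldenRatio_lt_two]
  have hqφ : φ⁻¹ * φ = 1 := inv_mul_cancel₀ goldenRatio_ne_zero
  -- |psi| = φ⁻¹
  have hpsi : (ψ:ℝ) = -(φ⁻¹) := psi_eq
  -- identity
  have hid : φ ^ h * (Nat.fib (h+2) : ℝ) = (Nat.fib (2*h+2) : ℝ) - ψ^(h+2) * Nat.fib h := by
    rw [Real.coe_fib_eq, Real.coe_fib_eq, Real.coe_fib_eq]
    field_simp
    ring
  -- fib h ≤ (φ^h + 1)/2
  have hψh : |(ψ:ℝ)^h| ≤ 1 := by
    rw [abs_pow, hpsi, abs_neg, abs_of_pos hq]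
    exact pow_le_one₀ hq.le hq1.le
  have hfibh : (Nat.fib h : ℝ) ≤ (φ^h + 1)/2 := by
    rw [Real.coe_fib_eq]
    rw [div_le_div_iff₀ h5 (by norm_num)]
    have h1 : φ^h - ψ^h ≤ φ^h + 1 := by
      have := abs_le.mp hψh
      linarith [this.1]
    have h0 : (0:ℝ) ≤ φ^h - ψ^h := by
      have := abs_le.mp hψh
      have : (1:ℝ) ≤ φ^h := one_le_pow₀ (le_of_lt one_lt_goldenRatio)
      linarith [(abs_le.mp hψh).2]
    nlinarith
  -- |ψ^(h+2) * fib h| ≤ 1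
  have hbound : -(1:ℝ) ≤ ψ^(h+2) * Nat.fib h ∧ ψ^(h+2) * Nat.fib h ≤ 1 := by
    have habs : |(ψ:ℝ)^(h+2) * Nat.fib h| ≤ 1 := by
      rw [abs_mul, abs_pow, hpsi, abs_neg, abs_of_pos hq, Nat.abs_cast]
      have hqh2 : φ⁻¹^(h+2) * (Nat.fib h : ℝ) ≤ φ⁻¹^(h+2) * ((φ^h+1)/2) :=
        mul_le_mul_of_nonneg_left hfibh (by positivity)
      have hkey : φ⁻¹^(h+2) * ((φ^h+1)/2) ≤ 1 := by
        have e1 : φ⁻¹^(h+2) * φ^h = φ⁻¹^2 := by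
          rw [pow_add]
          rw [mul_comm (φ⁻¹^h) (φ⁻¹^2), mul_assoc, ← mul_pow, hqφ]
          simp
        have e2 : φ⁻¹^2 ≤ 1 := pow_le_one₀ hq.le hq1.le
        have e3 : φ⁻¹^(h+2) ≤ 1 := pow_le_one₀ hq.le hq1.le
        nlinarith
      exact le_trans hqh2 hkey
    exact abs_le.mp habs
  -- conclude
  have hfin : (r:ℝ) * Nat.fib (h+2) < (Nat.fib (2*h+2) : ℝ) + 1 := by
    have hfpos : (0:ℝ) < (Nat.fib (h+2) : ℝ) := by
      exact_mod_cast Nat.fib_pos.mpr (by omega)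
    have : (r:ℝ) * Nat.fib (h+2) < φ^h * Nat.fib (h+2) :=
      mul_lt_mul_of_pos_right hr hfpos
    rw [hid] at this
    linarith [hbound.1]
  have : (r * Nat.fib (h+2) : ℕ) < Nat.fib (2*h+2) + 1 := by
    exact_mod_cast hfin
  omega

theorem stmt_9 (r h s t : ℕ) (hr : 0 < r) (hh : 0 < h)
    (hrh : (r : ℝ) < goldenphi ^ h) (hs : s ≤ r - 1) (ht : t ≤ r - 1) :
    ∃ u v : ℕ, u = hofG v ∧ u ≡ s [MOD r] ∧ v ≡ t [MOD r] ∧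
      (0 < v → ∃ (L : ℕ) (β : ℕ → ℕ), L ≤ 2 * h ∧ (∀ i, β i = 0 ∨ β i = 1) ∧
        β L = 1 ∧ (∀ i, 1 ≤ i → i < L → ¬(β i = 1 ∧ β (i + 1) = 1)) ∧
        v = ∑ i ∈ Finset.Icc 1 L, β i * Nat.fib (i + 1)) := by
  rw [goldenphi_eq] at hrh
  have hrpos : (0:ℝ) < (r:ℝ) := by exact_mod_cast hr
  have hr0 : (r:ℝ) ≠ 0 := hrpos.ne'
  have hφ0 : φ ≠ 0 := goldenRatio_ne_zero
  obtain ⟨k, n, hk, hy1, hy2⟩ := hitting h ((s:ℝ)/r - ((t:ℝ)+1)/(r*φ))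
  have hwin : φ⁻¹ ^ h < 1/r := by
    rw [inv_pow, one_div]
    exact inv_strictAnti₀ hrpos hrh
  set v : ℕ := t + k * r with hv
  have hY1 : (s:ℝ) - ((t:ℝ)+1)/φ ≤ (r:ℝ)*((k:ℝ)*φ - n) := by
    have hm := mul_le_mul_of_nonneg_left hy1 hrpos.le
    calc (s:ℝ) - ((t:ℝ)+1)/φ = (r:ℝ) * ((s:ℝ)/r - ((t:ℝ)+1)/(r*φ)) := by
          field_simp
    _ ≤ _ := hm
  have hY2 : (r:ℝ)*((k:ℝ)*φ - n) < (s:ℝ) - ((t:ℝ)+1)/φ + 1 := by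
    have h1 : (k:ℝ)*φ - n < ((s:ℝ)/r - ((t:ℝ)+1)/(r*φ)) + 1/r :=
      lt_of_lt_of_le hy2 (by linarith [hwin])
    have hm := mul_lt_mul_of_pos_left h1 hrpos
    calc (r:ℝ)*((k:ℝ)*φ - n) < (r:ℝ) * ((s:ℝ)/r - ((t:ℝ)+1)/(r*φ) + 1/r) := hm
    _ = (s:ℝ) - ((t:ℝ)+1)/φ + 1 := by
          field_simp
  have f2 : ((v:ℝ)+1)/φ = ((t:ℝ)+1)/φ + (r:ℝ)*((k:ℝ)*φ - n) + (r:ℝ)*((n:ℝ) - k) := by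
    rw [div_eq_mul_inv, div_eq_mul_inv, inv_gold_eq, hv]
    push_cast
    ring
  have hfloor : ⌊((v:ℝ)+1)/goldenphi⌋ = (s:ℤ) + (n - k) * r := by
    rw [goldenphi_eq]
    rw [Int.floor_eq_iff]
    have e : ((n:ℝ) - (k:ℝ)) * (r:ℝ) = (r:ℝ) * ((n:ℝ) - (k:ℝ)) := mul_comm _ _
    constructor
    · push_cast
      rw [f2]
      linarith [hY1, e]
    · push_cast
      rw [f2]
      linarith [hY2, e]
  have hnonneg : (0:ℤ) ≤ (s:ℤ) + (n - k) * r := by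
    rw [← hfloor]
    apply Int.floor_nonneg.mpr
    apply div_nonneg
    · positivity
    · rw [goldenphi_eq]; exact goldenRatio_pos.le
  have hu : (hofG v : ℤ) = (s:ℤ) + (n - k) * r := by
    unfold hofG
    rw [hfloor, Int.toNat_of_nonneg hnonneg]
  refine ⟨hofG v, v, rfl, ?_, ?_, ?_⟩
  · -- hofG v ≡ s [MOD r]
    have hz : (hofG v : ℤ) % r = (s:ℤ) % r := by
      rw [hu, Int.add_mul_emod_self_right]
    have : ((hofG v % r : ℕ) : ℤ) = ((s % r : ℕ) : ℤ) := by
      push_cast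
      exact hz
    exact_mod_cast this
  · -- v ≡ t [MOD r]
    show v % r = t % r
    rw [hv]
    exact Nat.add_mul_mod_self_right t k r
  · intro hvpos
    obtain ⟨L, β, hL1, hfib, hbin, hβL, hnc, hsum⟩ := zeck v hvpos
    have hvlt : v < Nat.fib (2*h+2) := by
      have hb := key_bound r h hh hrh
      have hk1 : k + 1 ≤ Nat.fib (h+2) := hk
      have hmul : (k+1) * r ≤ Nat.fib (h+2) * r := Nat.mul_le_mul_right r hk1
      have hexp : (k+1) * r = k*r + r := by ring
      have hcomm : Nat.fib (h+2) * r = r * Nat.fib (h+2) := Nat.mul_comm _ _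
      omega
    have hLb : L ≤ 2*h := by
      by_contra hcon
      push_neg at hcon
      have := Nat.fib_mono (show 2*h+2 ≤ L+1 by omega)
      omega
    exact ⟨L, β, hLb, hbin, hβL, hnc, hsum⟩
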